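/- Let p be a prime, m a positive integer, k an integer with 1 ≤ k ≤ m−1 and q = p^k. Let α, b ∈ F and let a ∈ F be nonzero. Then the Taniguchi multiplication T(q, α, a, b) on F × F is isotopic to the Taniguchi multiplication T(q, α, 1, b·a^{−(1+p^{m−k})}). -/

import Mathlib

open scoped Classical
noncomputable section

abbrev GF (p m : ℕ) [Fact p.Prime] := GaloisField p m

/-- The Taniguchi multiplication `T(q,α,a,b)` on `F × F` where `F = F_{p^m}`. -/
def taniMul (p m : ℕ) [Fact p.Prime] (q : ℕ) (α a b : GF p m) :
    GF p m × GF p m → GF p m × GF p m → GF p m × GF p m :=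
  fun w z =>
    (w.1 ^ q * z.1 + α ^ q ^ 2 * w.1 * z.1 ^ q
       - a * (w.1 * z.2 ^ q - α ^ q * z.1 * w.2 ^ q)
       - b * (w.2 ^ q * z.2 + α * w.2 * z.2 ^ q),
     w.1 * z.2 ^ q ^ 2 + w.2 ^ q ^ 2 * z.1)

/-- Two multiplications on `F × F` are isotopic if there are `F_p`-linear bijections
`N, L, M` with `N (w ∘₁ z) = L w ∘₂ M z` for all `w, z`. -/
def Isotopic (p m : ℕ) [Fact p.Prime]
    (mul1 mul2 : GF p m × GF p m → GF p m × GF p m → GF p m × GF p m) : Prop :=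
  ∃ N L M : (GF p m × GF p m) ≃ₗ[ZMod p] GF p m × GF p m,
    ∀ w z, N (mul1 w z) = mul2 (L w) (M z)

/-- With `a ≠ 0`, `T(q,α,a,b)` is isotopic to `T(q,α,1, b·a^{-(1+p^{m-k})})`. -/
theorem taniguchi_isotopic_a_one (p m k : ℕ) [Fact p.Prime] (hm : 0 < m)
    (hk1 : 1 ≤ k) (hk2 : k ≤ m - 1) (α a b : GF p m) (ha : a ≠ 0) :
    Isotopic p m (taniMul p m (p ^ k) α a b)
      (taniMul p m (p ^ k) α 1 (b * (a ^ (1 + p ^ (m - k)))⁻¹)) := by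
  have hkm : k ≤ m := le_trans hk2 (Nat.sub_le m 1)
  set c := a ^ (p ^ (m - k)) with hc_def
  have hc : c ≠ 0 := pow_ne_zero _ ha
  haveI : Fintype (GF p m) := Fintype.ofFinite _
  have hcq : c ^ (p ^ k) = a := by
    rw [hc_def, ← pow_mul, ← pow_add, Nat.sub_add_cancel hkm,
      ← GaloisField.card p m hm.ne', Nat.card_eq_fintype_card, FiniteField.pow_card]
  have haq : (a : GF p m) ^ (p ^ k) ≠ 0 := pow_ne_zero _ ha
  have hcq2 : c ^ (p ^ k) ^ 2 = a ^ (p ^ k) := by rw [sq, pow_mul, hcq]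
  have hac : a ^ (1 + p ^ (m - k)) = a * c := by rw [pow_add, pow_one]
  let scal : ∀ d : GF p m, d ≠ 0 → (GF p m × GF p m) ≃ₗ[ZMod p] GF p m × GF p m :=
    fun d hd => (LinearEquiv.refl (ZMod p) (GF p m)).prodCongr
      ((LinearEquiv.smulOfNeZero (GF p m) (GF p m) d hd).restrictScalars (ZMod p))
  refine ⟨scal (a ^ p ^ k) haq, scal c hc, scal c hc, ?_⟩
  rintro ⟨x, y⟩ ⟨u, v⟩
  simp only [taniMul, scal, LinearEquiv.prodCongr_apply, LinearEquiv.refl_apply,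
    LinearEquiv.restrictScalars_apply, LinearEquiv.smulOfNeZero_apply, Units.smul_def, Units.val_mk0, smul_eq_mul,
    Prod.mk.injEq]
  constructor
  · have h1 : (c * v) ^ (p ^ k) = a * v ^ (p ^ k) := by rw [mul_pow, hcq]
    have h2 : (c * y) ^ (p ^ k) = a * y ^ (p ^ k) := by rw [mul_pow, hcq]
    rw [h1, h2, hac]
    field_simp
  · have h1 : (c * v) ^ (p ^ k) ^ 2 = a ^ (p ^ k) * v ^ (p ^ k) ^ 2 := by
      rw [mul_pow, hcq2]
    have h2 : (c * y) ^ (p ^ k) ^ 2 = a ^ (p ^ k) * y ^ (p ^ k) ^ 2 := by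
      rw [mul_pow, hcq2]
    rw [h1, h2]; ring
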